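/- For a 1-dimensional Noetherian local ring (R, m), an m-primary ideal I, an I-admissible filtration 𝓘 = {I_n}, and a minimal reduction J = (x) of 𝓘, one has e_1(𝓘) = Σ_{n≥1} [ length(I_n / J·I_{n-1}) − length((0 : x) ∩ I_{n-1}) ]. -/

import Mathlib

open IsLocalRing

/-- Length of a module, as the Krull dimension of its lattice of submodules. -/
noncomputable def modLen (R M : Type*) [CommRing R] [AddCommGroup M] [Module R M] : ℕ :=
  ((Order.krullDim (Submodule R M)).unbotD 0).toNat

/-- `F` is an `I`-admissible (ℤ-indexed) filtration of ideals. -/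
def IsAdmissibleFiltration {R : Type*} [CommRing R] (I : Ideal R) (F : ℤ → Ideal R) : Prop :=
  (∀ n : ℤ, F (n + 1) ≤ F n) ∧ (∀ m n : ℤ, F m * F n ≤ F (m + n)) ∧
    (∀ n : ℤ, n ≤ 0 → F n = ⊤) ∧
    ∃ k : ℕ, ∀ n : ℤ, I ^ n.toNat ≤ F n ∧ F n ≤ I ^ (n - k).toNat

/-- The length of `A/B` for ideals `B ≤ A`. -/
noncomputable def idealQuotLen (R : Type*) [CommRing R] (A B : Ideal R) : ℕ :=
  modLen R (A ⧸ Submodule.comap (Submodule.subtype (A : Submodule R R)) (B : Submodule R R))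

section Aux
open Order

lemma myHeight_add_one_le {α : Type*} [Preorder α] {x y : α} (h : x < y) :
    Order.height x + 1 ≤ Order.height y := by
  by_cases hfin : Order.height x < ⊤
  · exact ENat.add_one_le_iff (by simpa [lt_top_iff_ne_top] using hfin) |>.2
      (Order.height_strictMono h hfin)
  · have hx : Order.height x = ⊤ := by simpa [lt_top_iff_ne_top, not_not] using hfin
    have : Order.height y = ⊤ := top_le_iff.mp (hx ▸ Order.height_mono h.le)
    simp [hx, this]

section
variable {α : Type*} [Lattice α] [IsModularLattice α] (a : α)

lemma myKrullDim_split :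
    Order.krullDim α = Order.krullDim {b : α // b ≤ a} + Order.krullDim {b : α // a ≤ b} := by
  have : Nonempty α := ⟨a⟩
  have h1 : Nonempty {b : α // b ≤ a} := ⟨⟨a, le_rfl⟩⟩
  have h2 : Nonempty {b : α // a ≤ b} := ⟨⟨a, le_rfl⟩⟩
  apply le_antisymm
  · -- split chain by ⊓ a, ⊔ a
    refine iSup_le fun p => ?_
    have key : ∀ m : ℕ, ∀ hm : m < p.length + 1,
        (m : ℕ∞) ≤ Order.height (⟨p ⟨m, hm⟩ ⊓ a, inf_le_right⟩ : {b : α // b ≤ a})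
          + Order.height (⟨p ⟨m, hm⟩ ⊔ a, le_sup_right⟩ : {b : α // a ≤ b}) := by
      intro m
      induction m with
      | zero => intro hm; simp
      | succ m ih =>
        intro hm
        have hm' : m < p.length + 1 := by omega
        have hlt : p ⟨m, hm'⟩ < p ⟨m + 1, hm⟩ := p.strictMono (by simp [Fin.lt_def])
        by_cases hinf : p ⟨m, hm'⟩ ⊓ a = p ⟨m+1, hm⟩ ⊓ a
        · -- sup strict
          have hsup : p ⟨m, hm'⟩ ⊔ a < p ⟨m+1, hm⟩ ⊔ a :=
            sup_lt_sup_of_lt_of_inf_le_inf hlt (le_of_eq hinf.symm)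
          have hs : (⟨p ⟨m, hm'⟩ ⊔ a, le_sup_right⟩ : {b : α // a ≤ b})
              < ⟨p ⟨m+1, hm⟩ ⊔ a, le_sup_right⟩ := by exact hsup
          have := myHeight_add_one_le hs
          have hmono : Order.height (⟨p ⟨m, hm'⟩ ⊓ a, inf_le_right⟩ : {b : α // b ≤ a})
              ≤ Order.height (⟨p ⟨m+1, hm⟩ ⊓ a, inf_le_right⟩ : {b : α // b ≤ a}) :=
            Order.height_mono (by exact inf_le_inf_right a hlt.le)
          calc (↑(m+1) : ℕ∞) = (m : ℕ∞) + 1 := by push_cast; ring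
            _ ≤ _ + _ + 1 := by exact add_le_add_left (ih hm') 1
            _ ≤ _ := by
                rw [add_assoc]
                exact add_le_add hmono this
        · have hinf' : (⟨p ⟨m, hm'⟩ ⊓ a, inf_le_right⟩ : {b : α // b ≤ a})
              < ⟨p ⟨m+1, hm⟩ ⊓ a, inf_le_right⟩ := by
            refine lt_of_le_of_ne ?_ (by simpa [Subtype.ext_iff] using hinf)
            exact inf_le_inf_right a hlt.le
          have := myHeight_add_one_le hinf'
          have hmono : Order.height (⟨p ⟨m, hm'⟩ ⊔ a, le_sup_right⟩ : {b : α // a ≤ b})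
              ≤ Order.height (⟨p ⟨m+1, hm⟩ ⊔ a, le_sup_right⟩ : {b : α // a ≤ b}) :=
            Order.height_mono (by exact sup_le_sup_right hlt.le a)
          calc (↑(m+1) : ℕ∞) = (m : ℕ∞) + 1 := by push_cast; ring
            _ ≤ _ + _ + 1 := by exact add_le_add_left (ih hm') 1
            _ ≤ _ := by
                rw [add_assoc, add_comm (Order.height _) 1, ← add_assoc]
                exact add_le_add this hmono
    have hp := key p.length (by omega)
    calc (p.length : WithBot ℕ∞) = ((p.length : ℕ∞) : WithBot ℕ∞) := by norm_cast
      _ ≤ ((Order.height (⟨p ⟨p.length, by omega⟩ ⊓ a, inf_le_right⟩ : {b : α // b ≤ a})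
            + Order.height (⟨p ⟨p.length, by omega⟩ ⊔ a, le_sup_right⟩ : {b : α // a ≤ b}) : ℕ∞)
              : WithBot ℕ∞) := by exact_mod_cast hp
      _ = (Order.height (⟨p ⟨p.length, by omega⟩ ⊓ a, inf_le_right⟩ : {b : α // b ≤ a}) : WithBot ℕ∞)
            + (Order.height (⟨p ⟨p.length, by omega⟩ ⊔ a, le_sup_right⟩ : {b : α // a ≤ b}) : WithBot ℕ∞) := by
          push_cast; rfl
      _ ≤ _ := add_le_add (Order.height_le_krullDim _) (Order.height_le_krullDim _)
  · -- glue
    have hb : Order.krullDim {b : α // b ≤ a} ≤ (Order.height a : WithBot ℕ∞) := by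
      refine iSup_le fun p => ?_
      have := Order.length_le_height (x := a) (p := p.map _ (Subtype.strictMono_coe _)) p.last.2
      exact_mod_cast this
    have hc : Order.krullDim {b : α // a ≤ b} ≤ (Order.coheight a : WithBot ℕ∞) := by
      refine iSup_le fun p => ?_
      have := Order.length_le_coheight (x := a) (p := p.map _ (Subtype.strictMono_coe _)) p.head.2
      exact_mod_cast this
    calc Order.krullDim {b : α // b ≤ a} + Order.krullDim {b : α // a ≤ b}
        ≤ (Order.height a : WithBot ℕ∞) + (Order.coheight a : WithBot ℕ∞) := add_le_add hb hc
      _ = ((Order.height a + Order.coheight a : ℕ∞) : WithBot ℕ∞) := by push_cast; rfl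
      _ ≤ ((⨆ b : α, Order.height b + Order.coheight b : ℕ∞) : WithBot ℕ∞) := by
          exact_mod_cast le_iSup (fun b : α => Order.height b + Order.coheight b) a
      _ = Order.krullDim α := (krullDim_eq_iSup_height_add_coheight_of_nonempty).symm

end


noncomputable def eLen (R M : Type*) [CommRing R] [AddCommGroup M] [Module R M] : ℕ∞ :=
  (Order.krullDim (Submodule R M)).unbotD 0

lemma modLen_eq_eLen (R M : Type*) [CommRing R] [AddCommGroup M] [Module R M] :
    modLen R M = (eLen R M).toNat := rfl

variable {R M N : Type*} [CommRing R] [AddCommGroup M] [Module R M]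
  [AddCommGroup N] [Module R N]

lemma krullDim_eq_eLen (R M : Type*) [CommRing R] [AddCommGroup M] [Module R M] :
    Order.krullDim (Submodule R M) = (eLen R M : WithBot ℕ∞) := by
  have h : (0 : WithBot ℕ∞) ≤ Order.krullDim (Submodule R M) := Order.krullDim_nonneg
  rcases hk : Order.krullDim (Submodule R M) with _ | k
  · rw [hk] at h; exact absurd h (by simp [WithBot.none_eq_bot])
  · simp only [eLen, hk]
    rfl

lemma eLen_congr (e : M ≃ₗ[R] N) : eLen R M = eLen R N := by
  unfold eLen
  rw [Order.krullDim_eq_of_orderIso (Submodule.orderIsoMapComap e)]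

lemma eLen_zero_of_subsingleton (h : Subsingleton M) : eLen R M = 0 := by
  have : Unique (Submodule R M) := ⟨⟨⊥⟩, fun a => Subsingleton.elim a ⊥⟩
  unfold eLen
  rw [Order.krullDim_eq_zero_of_unique]
  rfl

lemma modLen_zero_of_subsingleton (h : Subsingleton M) : modLen R M = 0 := by
  rw [modLen_eq_eLen, eLen_zero_of_subsingleton h]; rfl

lemma eLen_additive (P : Submodule R M) : eLen R M = eLen R P + eLen R (M ⧸ P) := by
  have hsplit := myKrullDim_split (α := Submodule R M) P
  have h1 : Order.krullDim (Submodule R P) = Order.krullDim {b : Submodule R M // b ≤ P} :=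
    Order.krullDim_eq_of_orderIso (Submodule.MapSubtype.orderIso P)
  have h2 : Order.krullDim (Submodule R (M ⧸ P)) = Order.krullDim {b : Submodule R M // P ≤ b} :=
    Order.krullDim_eq_of_orderIso (Submodule.comapMkQRelIso P)
  rw [← h1, ← h2, krullDim_eq_eLen R M, krullDim_eq_eLen R P, krullDim_eq_eLen R (M ⧸ P)]
    at hsplit
  exact_mod_cast hsplit

lemma eLen_quot_additive {A B : Submodule R M} (hAB : A ≤ B) :
    eLen R (M ⧸ A) = eLen R (M ⧸ B) + eLen R (↥B ⧸ Submodule.comap B.subtype A) := by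
  have h := eLen_additive (R := R) (M := M ⧸ A) (Submodule.map A.mkQ B)
  have e1 : ((M ⧸ A) ⧸ (Submodule.map A.mkQ B)) ≃ₗ[R] M ⧸ B :=
    Submodule.quotientQuotientEquivQuotient A B hAB
  have e2 : (↥B ⧸ Submodule.comap B.subtype A) ≃ₗ[R] ↥(Submodule.map A.mkQ B) := by
    have hker : LinearMap.ker (A.mkQ ∘ₗ B.subtype) = Submodule.comap B.subtype A := by
      rw [LinearMap.ker_comp, Submodule.ker_mkQ]
    have hrange : LinearMap.range (A.mkQ ∘ₗ B.subtype) = Submodule.map A.mkQ B := by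
      rw [LinearMap.range_comp, Submodule.range_subtype]
    exact (Submodule.quotEquivOfEq _ _ hker.symm).trans
      ((LinearMap.quotKerEquivRange (A.mkQ ∘ₗ B.subtype)).trans (LinearEquiv.ofEq _ _ hrange))
  rw [h, eLen_congr e1, eLen_congr e2, add_comm]

open Order IsLocalRing

variable {R : Type*} [CommRing R]

lemma eLen_le_one_of {Q : Type*} [AddCommGroup Q] [Module R Q]
    (h : ∀ P : Submodule R Q, P = ⊥ ∨ P = ⊤) : eLen R Q ≤ 1 := by
  have hk : Order.krullDim (Submodule R Q) ≤ ((1 : ℕ∞) : WithBot ℕ∞) := by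
    refine iSup_le fun p => ?_
    have hlen : p.length ≤ 1 := by
      by_contra hl
      push_neg at hl
      have h0 : p ⟨0, by omega⟩ < p ⟨1, by omega⟩ := p.strictMono (by simp [Fin.lt_def])
      have h1 : p ⟨1, by omega⟩ < p ⟨2, by omega⟩ := p.strictMono (by simp [Fin.lt_def])
      rcases h (p ⟨1, by omega⟩) with hb | ht
      · rw [hb] at h0; exact not_lt_bot h0
      · rw [ht] at h1; exact not_top_lt h1
    exact_mod_cast hlen
  rw [krullDim_eq_eLen] at hk
  exact_mod_cast hk

lemma eLen_le_of_span [IsLocalRing R] (n : ℕ) :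
    ∀ (M : Type u) [AddCommGroup M] [Module R M] (S : Finset M), S.card ≤ n →
      Submodule.span R (S : Set M) = ⊤ → (∀ c ∈ maximalIdeal R, ∀ y : M, c • y = 0) →
      eLen R M ≤ n := by
  induction n with
  | zero =>
    intro M _ _ S hcard hspan _
    have : S = ∅ := Finset.card_eq_zero.mp (Nat.le_zero.mp hcard)
    subst this
    have hsub : Subsingleton M := by
      constructor
      intro y z
      have hy : y ∈ (⊤ : Submodule R M) := trivial
      rw [← hspan] at hy
      simp only [Finset.coe_empty, Submodule.span_empty, Submodule.mem_bot] at hy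
      have hz : z ∈ (⊤ : Submodule R M) := trivial
      rw [← hspan] at hz
      simp only [Finset.coe_empty, Submodule.span_empty, Submodule.mem_bot] at hz
      rw [hy, hz]
    rw [eLen_zero_of_subsingleton hsub]
    simp
  | succ n ih =>
    intro M _ _ S hcard hspan hkill
    classical
    by_cases hS : S = ∅
    · subst hS
      have := ih M ∅ (by simp) (by simpa using hspan) hkill
      exact this.trans (by norm_cast; omega)
    obtain ⟨y, hy⟩ := Finset.nonempty_of_ne_empty hS
    set P : Submodule R M := Submodule.span R {y} with hP
    have hadd := eLen_additive (R := R) (M := M) P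
    -- eLen P ≤ 1
    have hP1 : eLen R P ≤ 1 := by
      apply eLen_le_one_of
      intro W
      by_cases hW : W = ⊥
      · left; exact hW
      right
      obtain ⟨z, hzW, hz0⟩ := Submodule.exists_mem_ne_zero_of_ne_bot hW
      obtain ⟨r, hr⟩ := Submodule.mem_span_singleton.mp z.2
      have hrm : r ∉ maximalIdeal R := by
        intro hrm
        apply hz0
        apply Subtype.ext
        rw [← hr, hkill r hrm y]
        rfl
      have hru : IsUnit r := by
        by_contra hnu
        exact hrm ((IsLocalRing.mem_maximalIdeal r).mpr hnu)
      obtain ⟨u, hu⟩ := hru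
      rw [eq_top_iff]
      rintro ⟨w, hw⟩ _
      obtain ⟨t, ht⟩ := Submodule.mem_span_singleton.mp hw
      have hy_eq : y = (↑u⁻¹ : R) • (z : M) := by
        rw [← hr, ← hu, smul_smul, Units.inv_mul, one_smul]
      have : (⟨w, hw⟩ : P) = (t * ↑u⁻¹) • z := by
        apply Subtype.ext
        show w = (t * ↑u⁻¹) • (z : M)
        rw [← ht, hy_eq, smul_smul]
      rw [this]
      exact Submodule.smul_mem W _ hzW
    -- quotient spanned by image of S.erase y
    have hQ : eLen R (M ⧸ P) ≤ (n : ℕ∞) := by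
      set T : Finset (M ⧸ P) := Finset.image (Submodule.mkQ P) (S.erase y) with hT
      refine ih (M ⧸ P) T ?_ ?_ ?_
      · calc T.card ≤ (S.erase y).card := Finset.card_image_le
          _ ≤ n := by rw [Finset.card_erase_of_mem hy]; omega
      · have himg : Submodule.span R (Submodule.mkQ P '' (S : Set M)) = ⊤ := by
          rw [← Submodule.map_span, hspan, Submodule.map_top, Submodule.range_mkQ]
        rw [eq_top_iff, ← himg]
        apply Submodule.span_le.mpr
        intro q hq
        obtain ⟨w, hwS, rfl⟩ := hq
        by_cases hwy : w = y
        · have : Submodule.mkQ P w = 0 := by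
            rw [hwy, Submodule.mkQ_apply, Submodule.Quotient.mk_eq_zero]
            exact Submodule.mem_span_singleton_self y
          rw [this]
          exact Submodule.zero_mem _
        · apply Submodule.subset_span
          simp only [hT, Finset.coe_image, Set.mem_image]
          exact ⟨w, by simp [Finset.mem_erase, hwy, hwS], rfl⟩
      · intro c hc q
        obtain ⟨z, rfl⟩ := Submodule.mkQ_surjective P q
        rw [← map_smul, hkill c hc z, map_zero]
    calc eLen R M = eLen R P + eLen R (M ⧸ P) := hadd
      _ ≤ 1 + (n : ℕ∞) := add_le_add hP1 hQ
      _ = ((n + 1 : ℕ) : ℕ∞) := by push_cast; ring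

lemma eLen_ne_top [IsLocalRing R] [IsNoetherianRing R] (t : ℕ) :
    ∀ (M : Type u) [AddCommGroup M] [Module R M] [Module.Finite R M],
      (∀ c ∈ (maximalIdeal R) ^ t, ∀ y : M, c • y = 0) → eLen R M ≠ ⊤ := by
  induction t with
  | zero =>
    intro M _ _ _ h
    have hsub : Subsingleton M := by
      constructor
      intro y z
      have hy := h 1 (by simp) y
      have hz := h 1 (by simp) z
      rw [one_smul] at hy hz
      rw [hy, hz]
    rw [eLen_zero_of_subsingleton hsub]
    simp
  | succ t ih =>
    intro M _ _ _ h
    set P : Submodule R M := (maximalIdeal R) • ⊤ with hPdef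
    have hadd := eLen_additive (R := R) (M := M) P
    have hMF : IsNoetherian R M := isNoetherian_of_isNoetherianRing_of_finite R M
    have hPfin : Module.Finite R P := Module.Finite.iff_fg.mpr (IsNoetherian.noetherian P)
    have hPlen : eLen R P ≠ ⊤ := by
      refine ih P ?_
      intro c hc y
      apply Subtype.ext
      show c • (y : M) = 0
      have hy : (y : M) ∈ (maximalIdeal R) • (⊤ : Submodule R M) := y.2
      refine Submodule.smul_induction_on (p := fun z => c • z = 0) hy ?_ ?_
      · intro r hr z _
        rw [smul_smul]
        exact h (c * r) (by rw [pow_succ]; exact Ideal.mul_mem_mul hc hr) z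
      · intro a b ha hb
        rw [smul_add, ha, hb, add_zero]
    have hQfin : eLen R (M ⧸ P) ≠ ⊤ := by
      obtain ⟨S, hS⟩ := Module.Finite.fg_top (R := R) (M := M ⧸ P)
      have hle := eLen_le_of_span S.card (M ⧸ P) S le_rfl hS ?_
      · exact ne_top_of_le_ne_top (ENat.coe_ne_top _) hle
      · intro c hc q
        obtain ⟨z, rfl⟩ := Submodule.mkQ_surjective P q
        rw [← map_smul, Submodule.mkQ_apply, Submodule.Quotient.mk_eq_zero]
        exact Submodule.smul_mem_smul hc trivial
    rw [hadd]
    exact WithTop.add_ne_top.mpr ⟨hPlen, hQfin⟩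

lemma enat_combine {LX La Lb Lq Lc1 Lc2 Lw Lu Lv L0 L1 : ℕ∞}
    (e1 : LX = L1 + La) (e2 : LX = Lc1 + Lw) (e4 : L0 = Lu + Lv) (e5 : Lq = Lv)
    (e6 : Lc2 = Lb + Lq) (e3 : Lw = Lu) : La + Lc2 + L1 = Lb + Lc1 + L0 := by
  have e12 : L1 + La = Lc1 + Lw := e1.symm.trans e2
  rw [e6, e4, ← e5, ← e3]
  calc La + (Lb + Lq) + L1 = (Lb + Lq) + (L1 + La) := by ring
    _ = (Lb + Lq) + (Lc1 + Lw) := by rw [e12]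
    _ = Lb + Lc1 + (Lw + Lq) := by ring


end Aux

theorem stmt1 {R : Type*} [CommRing R] [IsNoetherianRing R] [IsLocalRing R]
    (hdim : ringKrullDim R = 1)
    (I : Ideal R) (hI : I.radical = maximalIdeal R)
    (F : ℤ → Ideal R) (hF : IsAdmissibleFiltration I F)
    (x : R) (hx1 : x ∈ F 1)
    (hred : ∃ N : ℕ, ∀ n : ℕ, N ≤ n → Ideal.span {x} * F n = F (n + 1))
    (e0 e1 : ℤ)
    (hP : ∃ N : ℕ, ∀ n : ℕ, N ≤ n → (modLen R (R ⧸ F n) : ℤ) = e0 * n - e1) :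
    e1 = ∑ᶠ n : ℕ,
      ((idealQuotLen R (F (n + 1)) (Ideal.span {x} * F n) : ℤ) -
        (modLen R ↥((LinearMap.ker (LinearMap.toSpanSingleton R R x) : Submodule R R) ⊓
          (F n : Submodule R R)) : ℤ)) := by
  classical
  obtain ⟨hFanti, hFmul, hFtop, k, hFk⟩ := hF
  obtain ⟨N₀, hN₀⟩ := hred
  obtain ⟨NP, hNP⟩ := hP
  set K : Submodule R R := LinearMap.ker (LinearMap.toSpanSingleton R R x) with hK
  have hKmem : ∀ y : R, y ∈ K ↔ y * x = 0 := by
    intro y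
    rw [hK, LinearMap.mem_ker, LinearMap.toSpanSingleton_apply, smul_eq_mul]
  -- powers of the maximal ideal
  obtain ⟨s, hs⟩ := Ideal.exists_radical_pow_le_of_fg I (IsNoetherian.noetherian _)
  rw [hI] at hs
  have hIF : ∀ n : ℕ, I ^ n ≤ F n := by
    intro n
    have := (hFk (n : ℤ)).1
    simpa using this
  have hmF : ∀ n : ℕ, maximalIdeal R ^ (s * n) ≤ F n := fun n => by
    rw [pow_mul]
    exact le_trans (Ideal.pow_right_mono hs n) (hIF n)
  have hxF : ∀ n : ℕ, Ideal.span {x} * F (n : ℤ) ≤ F ((n : ℤ) + 1) := by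
    intro n
    have h1 : Ideal.span {x} ≤ F 1 := by
      rw [Ideal.span_le, Set.singleton_subset_iff]; exact hx1
    calc Ideal.span {x} * F (n : ℤ) ≤ F 1 * F (n : ℤ) := Ideal.mul_mono h1 le_rfl
      _ ≤ F (1 + n) := hFmul 1 n
      _ = F ((n : ℤ) + 1) := by rw [add_comm]
  have hIx : I ^ (N₀ + 1) ≤ Ideal.span {x} := by
    calc I ^ (N₀ + 1) ≤ F ((N₀ : ℤ) + 1) := by
          have := hIF (N₀ + 1)
          rwa [show ((N₀ + 1 : ℕ) : ℤ) = (N₀ : ℤ) + 1 by push_cast; ring] at this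
      _ = Ideal.span {x} * F (N₀ : ℤ) := (hN₀ N₀ le_rfl).symm
      _ ≤ Ideal.span {x} := Ideal.mul_le_left
  have hmx : maximalIdeal R ^ (s * (N₀ + 1)) ≤ Ideal.span {x} := by
    rw [pow_mul]
    exact le_trans (Ideal.pow_right_mono hs _) hIx
  set T : ℕ := s * (N₀ + 1) with hT
  -- finiteness of lengths
  have hLfin : ∀ n : ℕ, eLen R (R ⧸ F (n : ℤ)) ≠ ⊤ := by
    intro n
    refine eLen_ne_top (s * n) _ ?_
    intro c hc y
    obtain ⟨r, rfl⟩ := Submodule.mkQ_surjective _ y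
    rw [← map_smul, Submodule.mkQ_apply, Submodule.Quotient.mk_eq_zero]
    exact Ideal.mul_mem_right r _ (hmF n hc)
  have hKkill : ∀ c ∈ Ideal.span {x}, ∀ y ∈ K, c * y = 0 := by
    intro c hc y hy
    obtain ⟨r, rfl⟩ := Ideal.mem_span_singleton.mp hc
    have hyx := (hKmem y).mp hy
    calc x * r * y = r * (y * x) := by ring
      _ = 0 := by rw [hyx, mul_zero]
  have hc2fin : eLen R ↥K ≠ ⊤ := by
    haveI : Module.Finite R ↥K := Module.Finite.iff_fg.mpr (IsNoetherian.noetherian K)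
    refine eLen_ne_top T _ ?_
    intro c hc y
    apply Subtype.ext
    show c • (y : R) = 0
    rw [smul_eq_mul]
    exact hKkill c (hmx hc) y y.2
  have hbfin : ∀ n : ℕ, eLen R ↥(K ⊓ (F (n : ℤ) : Submodule R R)) ≠ ⊤ := by
    intro n
    haveI : Module.Finite R ↥(K ⊓ (F (n : ℤ) : Submodule R R)) :=
      Module.Finite.iff_fg.mpr (IsNoetherian.noetherian _)
    refine eLen_ne_top T _ ?_
    intro c hc y
    apply Subtype.ext
    show c • (y : R) = 0
    rw [smul_eq_mul]
    exact hKkill c (hmx hc) y y.2.1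
  have hc1fin : eLen R (R ⧸ (Ideal.span {x} : Ideal R)) ≠ ⊤ := by
    refine eLen_ne_top T _ ?_
    intro c hc y
    obtain ⟨r, rfl⟩ := Submodule.mkQ_surjective _ y
    rw [← map_smul, Submodule.mkQ_apply, Submodule.Quotient.mk_eq_zero]
    exact Ideal.mul_mem_right r _ (hmx hc)
  have hafin : ∀ n : ℕ, eLen R
      (↥(F ((n : ℤ) + 1)) ⧸ Submodule.comap (Submodule.subtype (F ((n : ℤ) + 1) : Submodule R R))
        ((Ideal.span {x} * F (n : ℤ) : Ideal R) : Submodule R R)) ≠ ⊤ := by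
    intro n
    haveI : Module.Finite R ↥(F ((n : ℤ) + 1) : Submodule R R) :=
      Module.Finite.iff_fg.mpr (IsNoetherian.noetherian _)
    refine eLen_ne_top (T + s * n) _ ?_
    intro c hc y
    obtain ⟨z, rfl⟩ := Submodule.mkQ_surjective _ y
    rw [← map_smul, Submodule.mkQ_apply, Submodule.Quotient.mk_eq_zero]
    have hcx : c ∈ Ideal.span {x} * F (n : ℤ) := by
      have : maximalIdeal R ^ (T + s * n) ≤ Ideal.span {x} * F (n : ℤ) := by
        rw [pow_add]
        exact Ideal.mul_mono hmx (hmF n)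
      exact this hc
    rw [Submodule.mem_comap, Submodule.subtype_apply, Submodule.coe_smul, smul_eq_mul]
    exact Ideal.mul_mem_right _ _ hcx
  -- the key per-n identity
  set ℓ : ℕ → ℤ := fun j => (modLen R (R ⧸ F (j : ℤ)) : ℤ) with hℓ
  set C : ℤ := (modLen R (R ⧸ (Ideal.span {x} : Ideal R)) : ℤ) - (modLen R ↥K : ℤ) with hC
  have hkey : ∀ n : ℕ,
      ((idealQuotLen R (F ((n : ℤ) + 1)) (Ideal.span {x} * F (n : ℤ)) : ℤ) -
        (modLen R ↥(K ⊓ (F (n : ℤ) : Submodule R R)) : ℤ)) = C + ℓ n - ℓ (n + 1) := by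
    intro n
    have e1 := eLen_quot_additive (R := R) (M := R)
      (A := ((Ideal.span {x} * F (n : ℤ) : Ideal R) : Submodule R R))
      (B := (F ((n : ℤ) + 1) : Submodule R R)) (hxF n)
    have e2 := eLen_quot_additive (R := R) (M := R)
      (A := ((Ideal.span {x} * F (n : ℤ) : Ideal R) : Submodule R R))
      (B := (Ideal.span {x} : Submodule R R)) Ideal.mul_le_left
    have e4 := eLen_quot_additive (R := R) (M := R)
      (A := (F (n : ℤ) : Submodule R R)) (B := K ⊔ (F (n : ℤ) : Submodule R R)) le_sup_right
    have e5 : eLen R (↥K ⧸ Submodule.comap K.subtype (K ⊓ (F (n : ℤ) : Submodule R R)))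
        = eLen R (↥(K ⊔ (F (n : ℤ) : Submodule R R)) ⧸
            Submodule.comap (K ⊔ (F (n : ℤ) : Submodule R R)).subtype (F (n : ℤ) : Submodule R R)) :=
      eLen_congr (LinearMap.quotientInfEquivSupQuotient K (F (n : ℤ) : Submodule R R))
    have e6 : eLen R ↥K = eLen R ↥(K ⊓ (F (n : ℤ) : Submodule R R))
        + eLen R (↥K ⧸ Submodule.comap K.subtype (K ⊓ (F (n : ℤ) : Submodule R R))) := by
      have h := eLen_additive (R := R) (M := ↥K)
        (Submodule.comap K.subtype (K ⊓ (F (n : ℤ) : Submodule R R)))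
      rw [h, eLen_congr (Submodule.comapSubtypeEquivOfLe
        (inf_le_left : K ⊓ (F (n : ℤ) : Submodule R R) ≤ K))]
    -- e3 : first isomorphism theorem for r ↦ r x
    have e3 : eLen R (↥(Ideal.span {x} : Submodule R R) ⧸
          Submodule.comap (Ideal.span {x} : Submodule R R).subtype
            ((Ideal.span {x} * F (n : ℤ) : Ideal R) : Submodule R R))
        = eLen R (R ⧸ (K ⊔ (F (n : ℤ) : Submodule R R))) := by
      set ψ : R →ₗ[R] ↥(Ideal.span {x} : Submodule R R) :=
        LinearMap.codRestrict (Ideal.span {x} : Submodule R R) (LinearMap.toSpanSingleton R R x)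
          (fun r => by
            rw [LinearMap.toSpanSingleton_apply]
            exact Submodule.smul_mem _ r (Submodule.mem_span_singleton_self x)) with hψ
      set φ := (Submodule.comap (Ideal.span {x} : Submodule R R).subtype
            ((Ideal.span {x} * F (n : ℤ) : Ideal R) : Submodule R R)).mkQ ∘ₗ ψ with hφ
      have hψval : ∀ r : R, ((ψ r : R)) = r * x := fun r => by
        simp [hψ, LinearMap.toSpanSingleton_apply, smul_eq_mul]
      have hsurj : Function.Surjective φ := by
        intro q
        obtain ⟨z, rfl⟩ := Submodule.mkQ_surjective _ q
        obtain ⟨r, hr⟩ := Ideal.mem_span_singleton'.mp z.2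
        refine ⟨r, ?_⟩
        rw [hφ]
        show Submodule.mkQ _ (ψ r) = Submodule.mkQ _ z
        congr 1
        exact Subtype.ext (by rw [hψval r, hr])
      have hker : LinearMap.ker φ = K ⊔ (F (n : ℤ) : Submodule R R) := by
        ext r
        rw [hφ, LinearMap.mem_ker, LinearMap.comp_apply, Submodule.mkQ_apply,
          Submodule.Quotient.mk_eq_zero, Submodule.mem_comap]
        constructor
        · intro h
          have : (ψ r : R) ∈ Ideal.span {x} * F (n : ℤ) := h
          rw [hψval r] at this
          obtain ⟨z, hz, hzx⟩ := Ideal.mem_span_singleton_mul.mp this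
          refine Submodule.mem_sup.mpr ⟨r - z, ?_, z, hz, by ring⟩
          rw [hKmem]
          calc (r - z) * x = r * x - x * z := by ring
            _ = 0 := by rw [hzx]; ring
        · intro h
          obtain ⟨u, hu, f, hf, rfl⟩ := Submodule.mem_sup.mp h
          show (ψ (u + f) : R) ∈ Ideal.span {x} * F (n : ℤ)
          have h0 : x * u = 0 := hKkill x (Submodule.mem_span_singleton_self x) u hu
          have heq : ((u + f) * x) = x * f := by
            calc (u + f) * x = x * u + x * f := by ring
              _ = x * f := by rw [h0, zero_add]
          rw [hψval, heq]
          exact Ideal.mul_mem_mul (Submodule.mem_span_singleton_self x) hf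
      have equiv : (R ⧸ (K ⊔ (F (n : ℤ) : Submodule R R))) ≃ₗ[R]
          (↥(Ideal.span {x} : Submodule R R) ⧸
            Submodule.comap (Ideal.span {x} : Submodule R R).subtype
              ((Ideal.span {x} * F (n : ℤ) : Ideal R) : Submodule R R)) :=
        (Submodule.quotEquivOfEq _ _ hker.symm).trans (φ.quotKerEquivOfSurjective hsurj)
      exact (eLen_congr equiv).symm
    have key : eLen R (↥(F ((n : ℤ) + 1)) ⧸
          Submodule.comap (Submodule.subtype (F ((n : ℤ) + 1) : Submodule R R))
            ((Ideal.span {x} * F (n : ℤ) : Ideal R) : Submodule R R))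
        + eLen R ↥K + eLen R (R ⧸ F ((n : ℤ) + 1))
        = eLen R ↥(K ⊓ (F (n : ℤ) : Submodule R R))
            + eLen R (R ⧸ (Ideal.span {x} : Ideal R)) + eLen R (R ⧸ F (n : ℤ)) :=
      enat_combine e1 e2 e4 e5 e6 e3
    -- convert to ℕ and then ℤ
    obtain ⟨a', haa⟩ : ∃ u : ℕ, eLen R (↥(F ((n : ℤ) + 1)) ⧸
        Submodule.comap (Submodule.subtype (F ((n : ℤ) + 1) : Submodule R R))
          ((Ideal.span {x} * F (n : ℤ) : Ideal R) : Submodule R R)) = u :=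
      ⟨_, (ENat.coe_toNat (hafin n)).symm⟩
    obtain ⟨b', hbb⟩ : ∃ u : ℕ, eLen R ↥(K ⊓ (F (n : ℤ) : Submodule R R)) = u :=
      ⟨_, (ENat.coe_toNat (hbfin n)).symm⟩
    obtain ⟨c1', hcc1⟩ : ∃ u : ℕ, eLen R (R ⧸ (Ideal.span {x} : Ideal R)) = u :=
      ⟨_, (ENat.coe_toNat hc1fin).symm⟩
    obtain ⟨c2', hcc2⟩ : ∃ u : ℕ, eLen R ↥K = u := ⟨_, (ENat.coe_toNat hc2fin).symm⟩
    obtain ⟨L0', hL0⟩ : ∃ u : ℕ, eLen R (R ⧸ F (n : ℤ)) = u :=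
      ⟨_, (ENat.coe_toNat (hLfin n)).symm⟩
    have hL1fin : eLen R (R ⧸ F ((n : ℤ) + 1)) ≠ ⊤ := by
      have := hLfin (n + 1)
      rwa [show ((n + 1 : ℕ) : ℤ) = (n : ℤ) + 1 by push_cast; ring] at this
    obtain ⟨L1', hL1⟩ : ∃ u : ℕ, eLen R (R ⧸ F ((n : ℤ) + 1)) = u :=
      ⟨_, (ENat.coe_toNat hL1fin).symm⟩
    have hnat : a' + c2' + L1' = b' + c1' + L0' := by
      rw [haa, hbb, hcc1, hcc2, hL0, hL1] at key
      exact_mod_cast key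
    have hA : idealQuotLen R (F ((n : ℤ) + 1)) (Ideal.span {x} * F (n : ℤ)) = a' := by
      rw [idealQuotLen, modLen_eq_eLen, haa, ENat.toNat_coe]
    have hB : modLen R ↥(K ⊓ (F (n : ℤ) : Submodule R R)) = b' := by
      rw [modLen_eq_eLen, hbb, ENat.toNat_coe]
    have hC1 : modLen R (R ⧸ (Ideal.span {x} : Ideal R)) = c1' := by
      rw [modLen_eq_eLen, hcc1, ENat.toNat_coe]
    have hC2 : modLen R ↥K = c2' := by
      rw [modLen_eq_eLen, hcc2, ENat.toNat_coe]
    have hL0' : ℓ n = (L0' : ℤ) := by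
      rw [hℓ]
      simp only []
      rw [modLen_eq_eLen, hL0, ENat.toNat_coe]
    have hL1' : ℓ (n + 1) = (L1' : ℤ) := by
      rw [hℓ]
      simp only []
      rw [show ((n + 1 : ℕ) : ℤ) = (n : ℤ) + 1 by push_cast; ring, modLen_eq_eLen, hL1,
        ENat.toNat_coe]
    rw [hA, hB, hC, hC1, hC2, hL0', hL1']
    have : (a' : ℤ) + c2' + L1' = b' + c1' + L0' := by exact_mod_cast hnat
    linarith
  -- eventual vanishing
  have hstab := (monotone_stabilizes_iff_noetherian (R := R) (M := R)).mpr inferInstance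
  obtain ⟨j₀, hj₀⟩ := hstab ⟨fun j => LinearMap.ker (LinearMap.toSpanSingleton R R (x ^ j)),
    by
      intro j j' hjj
      obtain ⟨d, rfl⟩ := Nat.exists_eq_add_of_le hjj
      intro z hz
      rw [LinearMap.mem_ker, LinearMap.toSpanSingleton_apply, smul_eq_mul] at hz ⊢
      rw [pow_add, ← mul_assoc, hz, zero_mul]⟩
  have hFpow : ∀ j : ℕ, F ((N₀ + j : ℕ) : ℤ) = Ideal.span {x} ^ j * F (N₀ : ℤ) := by
    intro j
    induction j with
    | zero => simp
    | succ j ih =>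
      have h1 : Ideal.span {x} * F ((N₀ + j : ℕ) : ℤ) = F (((N₀ + j : ℕ) : ℤ) + 1) :=
        hN₀ (N₀ + j) (by omega)
      have h2 : ((N₀ + (j + 1) : ℕ) : ℤ) = ((N₀ + j : ℕ) : ℤ) + 1 := by push_cast; ring
      rw [h2, ← h1, ih, pow_succ]
      ring
  have hbot : ∀ n : ℕ, N₀ + j₀ ≤ n → K ⊓ (F (n : ℤ) : Submodule R R) = ⊥ := by
    intro n hn
    apply le_antisymm _ bot_le
    rintro y ⟨hyK, hyF⟩
    set j := n - N₀ with hj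
    have hn' : n = N₀ + j := by omega
    have hFy : y ∈ Ideal.span {x ^ j} * F (N₀ : ℤ) := by
      rw [← Ideal.span_singleton_pow, ← hFpow j, ← hn']
      exact hyF
    obtain ⟨z, hz, hzy⟩ := Ideal.mem_span_singleton_mul.mp hFy
    have hyx : y * x = 0 := (hKmem y).mp hyK
    have hz1 : z * x ^ (j + 1) = 0 := by
      calc z * x ^ (j + 1) = (x ^ j * z) * x := by ring
        _ = y * x := by rw [hzy]
        _ = 0 := hyx
    have hzj : z * x ^ j = 0 := by
      have hmem : z ∈ LinearMap.ker (LinearMap.toSpanSingleton R R (x ^ (j + 1))) := by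
        rw [LinearMap.mem_ker, LinearMap.toSpanSingleton_apply, smul_eq_mul]
        exact hz1
      have he1 := hj₀ (j + 1) (by omega)
      have he2 := hj₀ j (by omega)
      change LinearMap.ker (LinearMap.toSpanSingleton R R (x ^ j₀)) =
        LinearMap.ker (LinearMap.toSpanSingleton R R (x ^ (j + 1))) at he1
      change LinearMap.ker (LinearMap.toSpanSingleton R R (x ^ j₀)) =
        LinearMap.ker (LinearMap.toSpanSingleton R R (x ^ j)) at he2
      have : z ∈ LinearMap.ker (LinearMap.toSpanSingleton R R (x ^ j)) := by
        rw [← he2, he1]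
        exact hmem
      rwa [LinearMap.mem_ker, LinearMap.toSpanSingleton_apply, smul_eq_mul] at this
    rw [Submodule.mem_bot, ← hzy, ← hzj]
    ring
  have hAzero : ∀ n : ℕ, N₀ ≤ n →
      idealQuotLen R (F ((n : ℤ) + 1)) (Ideal.span {x} * F (n : ℤ)) = 0 := by
    intro n hn
    rw [idealQuotLen]
    apply modLen_zero_of_subsingleton
    rw [Submodule.Quotient.subsingleton_iff, eq_top_iff]
    rintro y -
    show (y : R) ∈ Ideal.span {x} * F (n : ℤ)
    rw [hN₀ n hn]
    exact y.2
  have hBzero : ∀ n : ℕ, N₀ + j₀ ≤ n →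
      modLen R ↥(K ⊓ (F (n : ℤ) : Submodule R R)) = 0 := by
    intro n hn
    apply modLen_zero_of_subsingleton
    have hb := hbot n hn
    constructor
    intro y z
    apply Subtype.ext
    have hy : (y : R) ∈ (⊥ : Submodule R R) := hb ▸ y.2
    have hz : (z : R) ∈ (⊥ : Submodule R R) := hb ▸ z.2
    rw [Submodule.mem_bot] at hy hz
    rw [hy, hz]
  -- final summation
  set M₀ : ℕ := N₀ + j₀ + NP + 1 with hM₀
  have hsupp : Function.support (fun n : ℕ =>
      ((idealQuotLen R (F ((n : ℤ) + 1)) (Ideal.span {x} * F (n : ℤ)) : ℤ) -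
        (modLen R ↥(K ⊓ (F (n : ℤ) : Submodule R R)) : ℤ))) ⊆ ↑(Finset.range M₀) := by
    intro n hn
    rw [Finset.coe_range, Set.mem_Iio]
    by_contra hge
    push_neg at hge
    apply hn
    show (_ : ℤ) - _ = 0
    rw [hAzero n (by omega), hBzero n (by omega)]
    simp
  rw [finsum_eq_sum_of_support_subset _ hsupp]
  have hsum : ∀ n ∈ Finset.range M₀,
      ((idealQuotLen R (F ((n : ℤ) + 1)) (Ideal.span {x} * F (n : ℤ)) : ℤ) -
        (modLen R ↥(K ⊓ (F (n : ℤ) : Submodule R R)) : ℤ)) = C + (ℓ n - ℓ (n + 1)) := by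
    intro n _
    rw [hkey n]
    ring
  rw [Finset.sum_congr rfl hsum, Finset.sum_add_distrib, Finset.sum_const, Finset.card_range,
    Finset.sum_range_sub' ℓ M₀]
  have hℓ0 : ℓ 0 = 0 := by
    rw [hℓ]
    simp only []
    have : F ((0 : ℕ) : ℤ) = ⊤ := hFtop 0 (by norm_num)
    rw [modLen_zero_of_subsingleton (Submodule.Quotient.subsingleton_iff.mpr this)]
    simp
  have hℓM : ℓ M₀ = e0 * M₀ - e1 := hNP M₀ (by omega)
  have hℓM1 : ℓ (M₀ + 1) = e0 * (M₀ + 1) - e1 := by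
    have := hNP (M₀ + 1) (by omega)
    rwa [show (((M₀ + 1 : ℕ)) : ℤ) = (M₀ : ℤ) + 1 by push_cast; ring] at this
  have hCe0 : C = e0 := by
    have h := hkey M₀
    rw [hAzero M₀ (by omega), hBzero M₀ (by omega), hℓM, hℓM1] at h
    push_cast at h
    linarith
  rw [hℓ0, hℓM, hCe0, nsmul_eq_mul]
  push_cast
  ring
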